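/- Let (D(k))_{k≥1} be an i.i.d. sequence of real-valued random variables with δ := −E[D(1)] > 0, E[D(1)²] < ∞, and P{D(1) > 0} > 0, and let Φ be the reflected random walk Φ(k+1) = max(Φ(k) + D(k+1), 0) started at Φ(0) = 0. Then for every θ₀ > 0 and every Λ₀ ∈ ℝ, Σ_{n=0}^{∞} E[exp(θ₀ Σ_{k=0}^{n-1} Φ(k) − n Λ₀) · 1{Φ(n) = 0}] = ∞. -/

import Mathlib

open MeasureTheory ProbabilityTheory Filter
open scoped ENNReal

set_option maxHeartbeats 1000000

private lemma sum_range_id_real (m : ℕ) :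
    (∑ k ∈ Finset.range m, (k : ℝ)) = m * (m - 1) / 2 := by
  induction m with
  | zero => simp
  | succ n ih => rw [Finset.sum_range_succ, ih]; push_cast; ring

private lemma exists_pos_Icc {Ω : Type*} [MeasureSpace Ω] (X : Ω → ℝ)
    (h : 0 < ℙ {ω | 0 < X ω}) :
    ∃ c C : ℝ, 0 < c ∧ c ≤ C ∧ 0 < ℙ {ω | X ω ∈ Set.Icc c C} := by
  by_contra hcon
  push_neg at hcon
  have hzero : ∀ n : ℕ, ℙ {ω | X ω ∈ Set.Icc (1 / (n + 1) : ℝ) (n + 1)} = 0 := by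
    intro n
    have h1 : (0 : ℝ) < 1 / (n + 1) := by positivity
    have h2 : (1 / (n + 1) : ℝ) ≤ n + 1 := by
      rw [div_le_iff₀ (by positivity)]
      nlinarith [Nat.cast_nonneg (α := ℝ) n]
    have := hcon _ _ h1 h2
    exact le_antisymm this zero_le
  have hsub : {ω | 0 < X ω} ⊆
      ⋃ n : ℕ, {ω | X ω ∈ Set.Icc (1 / (n + 1) : ℝ) (n + 1)} := by
    intro ω hω
    obtain ⟨n, hn⟩ := exists_nat_gt (max (X ω) (1 / X ω))
    have hx : (0 : ℝ) < X ω := hω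
    refine Set.mem_iUnion.2 ⟨n, ?_, ?_⟩
    · have hn' : (1 / X ω : ℝ) < n := lt_of_le_of_lt (le_max_right _ _) hn
      have h1 : 1 / X ω < (n : ℝ) + 1 := by linarith
      rw [div_le_iff₀ (by positivity)]
      rw [div_lt_iff₀ hx] at h1
      linarith
    · have := le_max_left (X ω) (1 / X ω)
      exact le_of_lt (lt_of_le_of_lt this (by push_cast; linarith [hn.le]))
  have : ℙ {ω | 0 < X ω} = 0 :=
    le_antisymm (le_trans (measure_mono hsub) (le_of_eq (measure_iUnion_null hzero)))
      zero_le
  exact absurd this (ne_of_gt h)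

private lemma neg_part_pos {Ω : Type*} [MeasureSpace Ω]
    [IsProbabilityMeasure (ℙ : Measure Ω)] (X : Ω → ℝ)
    (hint : Integrable X) (hneg : (∫ ω, X ω) < 0) :
    0 < ℙ {ω | 0 < -X ω} := by
  by_contra hcon
  push_neg at hcon
  have h0 : ℙ {ω | ¬ (0 ≤ X ω)} = 0 := by
    have : {ω | ¬ (0 ≤ X ω)} = {ω | 0 < -X ω} := by
      ext ω; simp [not_le, neg_pos]
    rw [this]; exact le_antisymm hcon zero_le
  have hae : ∀ᵐ ω ∂(ℙ : Measure Ω), 0 ≤ X ω := by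
    rw [MeasureTheory.ae_iff]; exact h0
  have := MeasureTheory.integral_nonneg_of_ae hae
  linarith

private lemma quad_tendsto (a K₁ K₂ : ℝ) (ha : 0 < a) :
    Tendsto (fun m : ℕ => a * (m : ℝ) ^ 2 - K₁ * m - K₂) atTop atTop := by
  have h1 : Tendsto (fun m : ℕ => a * (m : ℝ) - K₁) atTop atTop :=
    tendsto_atTop_add_const_right _ (-K₁)
      (tendsto_natCast_atTop_atTop.const_mul_atTop ha) |>.congr (fun m => by ring)
  have h2 : Tendsto (fun m : ℕ => (m : ℝ) * (a * m - K₁)) atTop atTop :=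
    tendsto_natCast_atTop_atTop.atTop_mul_atTop₀ h1
  have h3 := tendsto_atTop_add_const_right _ (-K₂) h2
  exact h3.congr (fun m => by ring)

theorem reflected_rw_gpe_infinite {Ω : Type*} [MeasureSpace Ω]
    [IsProbabilityMeasure (ℙ : Measure Ω)]
    (D : ℕ → Ω → ℝ) (hDmeas : ∀ k, Measurable (D k))
    (hiid : iIndepFun D)
    (hident : ∀ k, IdentDistrib (D k) (D 1))
    (δ : ℝ) (hδ : 0 < δ) (hDint : Integrable (D 1)) (hmean : (∫ ω, D 1 ω) = -δ)
    (hDsq : Integrable (fun ω => (D 1 ω) ^ 2))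
    (hpos : 0 < ℙ {ω | 0 < D 1 ω})
    (Φ : ℕ → Ω → ℝ) (hΦ0 : ∀ ω, Φ 0 ω = 0)
    (hΦstep : ∀ k ω, Φ (k + 1) ω = max (Φ k ω + D (k + 1) ω) 0) :
    ∀ θ₀ : ℝ, 0 < θ₀ → ∀ Λ₀ : ℝ,
      (∑' n : ℕ, ∫⁻ ω, Set.indicator {ω | Φ n ω = 0}
        (fun ω => ENNReal.ofReal
          (Real.exp (θ₀ * (∑ k ∈ Finset.range n, Φ k ω) - n * Λ₀))) ω) = ⊤ := by
  intro θ₀ hθ Λ₀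
  -- positive-probability intervals for the positive and negative parts of D 1
  obtain ⟨c, C, hc, hcC, hp⟩ := exists_pos_Icc (D 1) hpos
  have hDneg : (∫ ω, D 1 ω) < 0 := by rw [hmean]; linarith
  obtain ⟨b, B, hb, hbB, hq0⟩ :=
    exists_pos_Icc (fun ω => -D 1 ω) (neg_part_pos (D 1) hDint hDneg)
  have hqset : {ω | (fun ω => -D 1 ω) ω ∈ Set.Icc b B} = D 1 ⁻¹' Set.Icc (-B) (-b) := by
    ext ω
    simp only [Set.mem_setOf_eq, Set.mem_Icc, Set.mem_preimage]
    constructor <;> rintro ⟨h1, h2⟩ <;> constructor <;> linarith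
  rw [hqset] at hq0
  have hp2 : 0 < ℙ (D 1 ⁻¹' Set.Icc c C) := hp
  set p : ℝ≥0∞ := ℙ (D 1 ⁻¹' Set.Icc c C) with hpdef
  set q : ℝ≥0∞ := ℙ (D 1 ⁻¹' Set.Icc (-B) (-b)) with hqdef
  have hpt : p ≠ ⊤ := measure_ne_top _ _
  have hqt : q ≠ ⊤ := measure_ne_top _ _
  set p' : ℝ := p.toReal with hp'def
  set q' : ℝ := q.toReal with hq'def
  have hp' : 0 < p' := ENNReal.toReal_pos (ne_of_gt hp2) hpt
  have hq' : 0 < q' := ENNReal.toReal_pos (ne_of_gt hq0) hqt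
  have hp1 : p' ≤ 1 := by
    have h := ENNReal.toReal_mono ENNReal.one_ne_top (prob_le_one (μ := (ℙ : Measure Ω))
      (s := D 1 ⁻¹' Set.Icc c C))
    simpa using h
  have hq1 : q' ≤ 1 := by
    have h := ENNReal.toReal_mono ENNReal.one_ne_top (prob_le_one (μ := (ℙ : Measure Ω))
      (s := D 1 ⁻¹' Set.Icc (-B) (-b)))
    simpa using h
  set lp : ℝ := Real.log p' with hlpdef
  set lq : ℝ := Real.log q' with hlqdef
  have hΦnn : ∀ k ω, 0 ≤ Φ k ω := by
    intro k ω
    cases k with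
    | zero => simp [hΦ0]
    | succ k => rw [hΦstep]; exact le_max_right _ _
  suffices hM : ∀ M : ℝ, ENNReal.ofReal (Real.exp M) ≤
      ∑' n : ℕ, ∫⁻ ω, Set.indicator {ω | Φ n ω = 0}
        (fun ω => ENNReal.ofReal
          (Real.exp (θ₀ * (∑ k ∈ Finset.range n, Φ k ω) - n * Λ₀))) ω by
    apply ENNReal.eq_top_of_forall_nnreal_le
    intro s
    calc (s : ℝ≥0∞) = ENNReal.ofReal (s : ℝ) := ENNReal.ofReal_coe_nnreal.symm
      _ ≤ ENNReal.ofReal (Real.exp (s : ℝ)) := by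
          apply ENNReal.ofReal_le_ofReal
          linarith [Real.add_one_le_exp (s : ℝ)]
      _ ≤ _ := hM _
  intro M
  -- choose m large so that the quadratic lower bound beats M
  obtain ⟨m, hm⟩ := ((quad_tendsto (θ₀ * c / 2)
      (θ₀ * c / 2 + (1 + C / b) * |Λ₀| + |lp| + (C / b) * |lq|) (|Λ₀| + |lq|)
      (div_pos (mul_pos hθ hc) two_pos)).eventually_ge_atTop M).exists
  set r : ℕ := ⌈(m : ℝ) * C / b⌉₊ with hrdef
  set n : ℕ := m + r with hndef
  have hr1 : (m : ℝ) * C / b ≤ r := Nat.le_ceil _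
  have hr2 : (r : ℝ) ≤ (m : ℝ) * C / b + 1 := le_of_lt (Nat.ceil_lt_add_one
    (div_nonneg (mul_nonneg (Nat.cast_nonneg m) (le_of_lt (lt_of_lt_of_le hc hcC))) hb.le))
  have hbr : (m : ℝ) * C ≤ b * r := by
    rw [div_le_iff₀ hb] at hr1; linarith
  clear_value r
  -- the event
  set S : ℕ → Set ℝ := fun i => if i ≤ m then Set.Icc c C else Set.Icc (-B) (-b) with hSdef
  have hSmeas : ∀ i, MeasurableSet (S i) := by
    intro i
    by_cases h : i ≤ m <;> simp [hSdef, h, measurableSet_Icc]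
  set A : Set Ω := ⋂ i ∈ Finset.Ioc 0 n, D i ⁻¹' S i with hAdef
  have hAmeas : MeasurableSet A :=
    Finset.measurableSet_biInter _ fun i _ => (hSmeas i).preimage (hDmeas i)
  have hprod1 : ∏ i ∈ Finset.Ioc 0 m, ℙ (D 1 ⁻¹' S i) = p ^ m := by
    calc ∏ i ∈ Finset.Ioc 0 m, ℙ (D 1 ⁻¹' S i) = ∏ _i ∈ Finset.Ioc 0 m, p :=
          Finset.prod_congr rfl (fun i hi => by
            have h : i ≤ m := (Finset.mem_Ioc.1 hi).2
            simp only [hSdef, if_pos h, hpdef])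
      _ = p ^ m := by rw [Finset.prod_const, Nat.card_Ioc]; norm_num
  have hprod2 : ∏ i ∈ Finset.Ioc m n, ℙ (D 1 ⁻¹' S i) = q ^ r := by
    calc ∏ i ∈ Finset.Ioc m n, ℙ (D 1 ⁻¹' S i) = ∏ _i ∈ Finset.Ioc m n, q :=
          Finset.prod_congr rfl (fun i hi => by
            have h : ¬ i ≤ m := by
              have := (Finset.mem_Ioc.1 hi).1; omega
            simp only [hSdef, if_neg h, hqdef])
      _ = q ^ r := by
          rw [Finset.prod_const, Nat.card_Ioc, hndef, Nat.add_sub_cancel_left]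
  have hPA : ℙ A = p ^ m * q ^ r := by
    rw [hAdef, hiid.meas_biInter (fun i _ => ⟨S i, hSmeas i, rfl⟩)]
    rw [Finset.prod_congr rfl (fun i _ => (hident i).measure_mem_eq (hSmeas i))]
    rw [← Finset.prod_Ioc_consecutive _ (Nat.zero_le m) (Nat.le_add_right m r),
      hprod1, hprod2]
  -- trajectory bounds on the event
  have htraj : ∀ ω ∈ A, Φ n ω = 0 ∧
      c * ((m : ℝ) * ((m : ℝ) - 1) / 2) ≤ ∑ k ∈ Finset.range n, Φ k ω := by
    intro ω hω
    have hmem : ∀ i, 0 < i → i ≤ n → D i ω ∈ S i := by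
      intro i h1 h2
      exact Set.mem_iInter₂.1 hω i (Finset.mem_Ioc.2 ⟨h1, h2⟩)
    have hup : ∀ k, k ≤ m → c * k ≤ Φ k ω ∧ Φ k ω ≤ C * k := by
      intro k
      induction k with
      | zero => intro _; simp [hΦ0]
      | succ k ih =>
        intro hk
        obtain ⟨ih1, ih2⟩ := ih (by omega)
        have hD : D (k + 1) ω ∈ Set.Icc c C := by
          have h := hmem (k + 1) (Nat.succ_pos k) (by omega)
          simpa only [hSdef, if_pos hk] using h
        obtain ⟨hD1, hD2⟩ := hD
        have hk0 : (0 : ℝ) ≤ (k : ℝ) := Nat.cast_nonneg k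
        have hpos' : 0 ≤ Φ k ω + D (k + 1) ω := by nlinarith
        rw [hΦstep, max_eq_left hpos']
        constructor <;> push_cast <;> nlinarith
    have hdown : ∀ j, j ≤ r → Φ (m + j) ω ≤ max (C * m - b * j) 0 := by
      intro j
      induction j with
      | zero =>
        intro _
        have := (hup m le_rfl).2
        simp only [Nat.add_zero, Nat.cast_zero, mul_zero, sub_zero]
        exact le_max_of_le_left this
      | succ j ih =>
        intro hj
        have ihh := ih (by omega)
        have hD : D (m + j + 1) ω ∈ Set.Icc (-B) (-b) := by
          have hnot : ¬ (m + j + 1 ≤ m) := by omega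
          have h := hmem (m + j + 1) (by omega) (by omega)
          simpa only [hSdef, if_neg hnot] using h
        obtain ⟨hD1, hD2⟩ := hD
        rw [show m + (j + 1) = (m + j) + 1 from rfl, hΦstep]
        apply max_le _ (le_max_right _ _)
        rcases le_or_gt 0 (C * (m : ℝ) - b * j) with h | h
        · rw [max_eq_left h] at ihh
          apply le_max_of_le_left
          push_cast
          linarith
        · rw [max_eq_right h.le] at ihh
          apply le_max_of_le_right
          linarith
    have hΦn0 : Φ n ω = 0 := by
      have h1 := hdown r le_rfl
      have h2 : C * (m : ℝ) - b * r ≤ 0 := by linarith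
      rw [max_eq_right h2] at h1
      exact le_antisymm h1 (hΦnn n ω)
    refine ⟨hΦn0, ?_⟩
    have hsub : Finset.range m ⊆ Finset.range n := Finset.range_subset_range.2 (by omega)
    calc c * ((m : ℝ) * ((m : ℝ) - 1) / 2)
        = ∑ k ∈ Finset.range m, c * (k : ℝ) := by
          rw [← Finset.mul_sum, sum_range_id_real]
      _ ≤ ∑ k ∈ Finset.range m, Φ k ω :=
          Finset.sum_le_sum fun k hk => (hup k (Finset.mem_range.1 hk).le).1
      _ ≤ ∑ k ∈ Finset.range n, Φ k ω :=
          Finset.sum_le_sum_of_subset_of_nonneg hsub fun k _ _ => hΦnn k ω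
  -- lower bound the n-th term by the constant on the event
  set G0 : ℝ := θ₀ * (c * ((m : ℝ) * ((m : ℝ) - 1) / 2)) - (n : ℝ) * Λ₀ with hG0def
  have hterm : ENNReal.ofReal (Real.exp G0) * ℙ A ≤
      ∫⁻ ω, Set.indicator {ω | Φ n ω = 0}
        (fun ω => ENNReal.ofReal
          (Real.exp (θ₀ * (∑ k ∈ Finset.range n, Φ k ω) - n * Λ₀))) ω := by
    rw [← lintegral_indicator_const hAmeas]
    apply lintegral_mono
    intro ω
    by_cases hω : ω ∈ A
    · rw [Set.indicator_of_mem hω]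
      obtain ⟨h0, hs⟩ := htraj ω hω
      rw [Set.indicator_of_mem (show ω ∈ {ω | Φ n ω = 0} from h0)]
      apply ENNReal.ofReal_le_ofReal
      apply Real.exp_le_exp.2
      have := mul_le_mul_of_nonneg_left hs hθ.le
      rw [hG0def]
      linarith
    · rw [Set.indicator_of_notMem hω]; exact zero_le
  -- rewrite the probability in exponential form
  have hps : p ^ m = ENNReal.ofReal (Real.exp ((m : ℝ) * lp)) := by
    rw [hlpdef, Real.exp_nat_mul, Real.exp_log hp', hp'def,
      ENNReal.ofReal_pow ENNReal.toReal_nonneg, ENNReal.ofReal_toReal hpt]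
  have hqs : q ^ r = ENNReal.ofReal (Real.exp ((r : ℝ) * lq)) := by
    rw [hlqdef, Real.exp_nat_mul, Real.exp_log hq', hq'def,
      ENNReal.ofReal_pow ENNReal.toReal_nonneg, ENNReal.ofReal_toReal hqt]
  have hfin : ENNReal.ofReal (Real.exp M) ≤
      ∫⁻ ω, Set.indicator {ω | Φ n ω = 0}
        (fun ω => ENNReal.ofReal
          (Real.exp (θ₀ * (∑ k ∈ Finset.range n, Φ k ω) - n * Λ₀))) ω := by
    refine le_trans ?_ hterm
    rw [hPA, hps, hqs, ← ENNReal.ofReal_mul (Real.exp_nonneg _),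
      ← ENNReal.ofReal_mul (by positivity), ← Real.exp_add, ← Real.exp_add]
    apply ENNReal.ofReal_le_ofReal
    apply Real.exp_le_exp.2
    -- the big inequality : M ≤ G0 + m·lp + r·lq
    have hmr : (n : ℝ) = (m : ℝ) + (r : ℝ) := by rw [hndef]; push_cast; ring
    have hΛ : (n : ℝ) * Λ₀ ≤ ((m : ℝ) + ((m : ℝ) * C / b + 1)) * |Λ₀| := by
      have h1 : (n : ℝ) * Λ₀ ≤ (n : ℝ) * |Λ₀| :=
        mul_le_mul_of_nonneg_left (le_abs_self _) (Nat.cast_nonneg n)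
      have h2 : (n : ℝ) ≤ (m : ℝ) + ((m : ℝ) * C / b + 1) := by rw [hmr]; linarith
      have h3 : (n : ℝ) * |Λ₀| ≤ ((m : ℝ) + ((m : ℝ) * C / b + 1)) * |Λ₀| :=
        mul_le_mul_of_nonneg_right h2 (abs_nonneg Λ₀)
      linarith
    have hlp' : -((m : ℝ) * |lp|) ≤ (m : ℝ) * lp := by
      have := mul_le_mul_of_nonneg_left (neg_abs_le lp) (Nat.cast_nonneg (α := ℝ) m)
      linarith
    have hlq' : -(((m : ℝ) * C / b + 1) * |lq|) ≤ (r : ℝ) * lq := by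
      have h1 := mul_le_mul_of_nonneg_left (neg_abs_le lq) (Nat.cast_nonneg (α := ℝ) r)
      have h2 := mul_le_mul_of_nonneg_right hr2 (abs_nonneg lq)
      linarith
    have hexp : θ₀ * (c * ((m : ℝ) * ((m : ℝ) - 1) / 2)) =
        θ₀ * c / 2 * (m : ℝ) ^ 2 - θ₀ * c / 2 * (m : ℝ) := by ring
    rw [hmr] at hΛ
    rw [hG0def, hmr]
    ring_nf at hm hΛ hlp' hlq' ⊢
    linarith [hm, hΛ, hlp', hlq', hexp]
  exact le_trans hfin (ENNReal.le_tsum n)
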